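/- Let P and Q be probability measures on Ω₁×⋯×Ω_n (standard Borel spaces) that are both Bayes-nets with respect to a common DAG G with topological ordering (1,…,n) and parent sets Π_i ⊆ {1,…,i−1}. Then the Total Variation distance satisfies TV(P,Q) ≤ 2·Σ_{i=1}^n TV(P_{X_i∪X_{Π_i}}, Q_{X_i∪X_{Π_i}}). -/

import Mathlib

open MeasureTheory ProbabilityTheory Filter
open scoped ENNReal NNReal

noncomputable section

universe u

/-- Projection of a point of a product space onto the coordinates in `S`. -/
def proj {n : ℕ} {Ω : Fin n → Type*} (S : Finset (Fin n)) (x : ∀ i, Ω i) (i : S) : Ω i := x i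

lemma measurable_proj {n : ℕ} {Ω : Fin n → Type*} [∀ i, MeasurableSpace (Ω i)]
    (S : Finset (Fin n)) : Measurable (proj (Ω := Ω) S) :=
  measurable_pi_lambda _ fun _ => measurable_pi_apply _

/-- A finite measure `P` on a product of standard Borel spaces is a Bayes-net with respect to
the parent structure `par` (for the topological ordering `0 < 1 < ⋯ < n-1`) if, for every `i`,
the `i`-th coordinate is conditionally independent of the tuple of previous coordinates given
the tuple of parent coordinates `par i`. -/
def IsBayesNet {n : ℕ} {Ω : Fin n → Type*} [∀ i, MeasurableSpace (Ω i)]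
    [∀ i, StandardBorelSpace (Ω i)] [∀ i, Nonempty (Ω i)]
    (P : Measure (∀ i, Ω i)) [IsFiniteMeasure P] (par : Fin n → Finset (Fin n)) : Prop :=
  ∀ i : Fin n,
    CondIndepFun (MeasurableSpace.comap (proj (par i)) inferInstance)
      ((measurable_proj (par i)).comap_le) (fun x => x i) (proj (Finset.Iio i)) P

/-- The total variation distance `TV(P,Q) = sup_A |P(A) - Q(A)|`, the supremum running over
measurable sets `A`. -/
def tvDist {Ω : Type*} [MeasurableSpace Ω] (P Q : Measure Ω) : ℝ :=
  ⨆ A : {A : Set Ω // MeasurableSet A}, |(P A.1).toReal - (Q A.1).toReal|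

section TVAux

variable {α β : Type*} [MeasurableSpace α] [MeasurableSpace β]

instance : Nonempty {A : Set α // MeasurableSet A} := ⟨⟨∅, MeasurableSet.empty⟩⟩

lemma prob_toReal_le_one (P : Measure α) [IsProbabilityMeasure P] (A : Set α) :
    (P A).toReal ≤ 1 := by
  have h := prob_le_one (μ := P) (s := A)
  simpa using ENNReal.toReal_mono (by simp) h

lemma tvDist_bddAbove (P Q : Measure α) [IsProbabilityMeasure P] [IsProbabilityMeasure Q] :
    BddAbove (Set.range fun A : {A : Set α // MeasurableSet A} =>
      |(P A.1).toReal - (Q A.1).toReal|) := by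
  refine ⟨1, ?_⟩
  rintro x ⟨A, rfl⟩
  have h1 := prob_toReal_le_one P A.1
  have h2 := prob_toReal_le_one Q A.1
  have h3 : (0:ℝ) ≤ (P A.1).toReal := ENNReal.toReal_nonneg
  have h4 : (0:ℝ) ≤ (Q A.1).toReal := ENNReal.toReal_nonneg
  rw [abs_sub_le_iff]
  constructor <;> linarith

lemma abs_le_tvDist (P Q : Measure α) [IsProbabilityMeasure P] [IsProbabilityMeasure Q]
    {A : Set α} (hA : MeasurableSet A) :
    |(P A).toReal - (Q A).toReal| ≤ tvDist P Q :=
  le_ciSup (tvDist_bddAbove P Q) ⟨A, hA⟩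

lemma sub_le_tvDist (P Q : Measure α) [IsProbabilityMeasure P] [IsProbabilityMeasure Q]
    {A : Set α} (hA : MeasurableSet A) :
    (P A).toReal - (Q A).toReal ≤ tvDist P Q :=
  (le_abs_self _).trans (abs_le_tvDist P Q hA)

lemma tvDist_nonneg (P Q : Measure α) [IsProbabilityMeasure P] [IsProbabilityMeasure Q] :
    0 ≤ tvDist P Q :=
  (abs_nonneg _).trans (abs_le_tvDist P Q MeasurableSet.empty)

lemma tvDist_comm (P Q : Measure α) : tvDist P Q = tvDist Q P := by
  unfold tvDist
  simp_rw [abs_sub_comm]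

lemma tvDist_triangle (P Q R : Measure α) [IsProbabilityMeasure P] [IsProbabilityMeasure Q]
    [IsProbabilityMeasure R] : tvDist P R ≤ tvDist P Q + tvDist Q R :=
  ciSup_le fun A => (abs_sub_le _ _ _).trans
    (add_le_add (abs_le_tvDist P Q A.2) (abs_le_tvDist Q R A.2))

lemma tvDist_map_le (P Q : Measure α) [IsProbabilityMeasure P] [IsProbabilityMeasure Q]
    {f : α → β} (hf : Measurable f) :
    tvDist (P.map f) (Q.map f) ≤ tvDist P Q := by
  haveI : IsProbabilityMeasure (P.map f) := Measure.isProbabilityMeasure_map hf.aemeasurable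
  haveI : IsProbabilityMeasure (Q.map f) := Measure.isProbabilityMeasure_map hf.aemeasurable
  refine ciSup_le fun A => ?_
  rw [Measure.map_apply hf A.2, Measure.map_apply hf A.2]
  exact abs_le_tvDist P Q (hf A.2)

lemma tvDist_eq_zero_of_subsingleton [Subsingleton α] (P Q : Measure α)
    [IsProbabilityMeasure P] [IsProbabilityMeasure Q] : tvDist P Q = 0 := by
  refine le_antisymm (ciSup_le fun A => ?_) (tvDist_nonneg P Q)
  rcases Set.eq_empty_or_nonempty A.1 with h | h
  · simp [h]
  · have : A.1 = Set.univ := by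
      obtain ⟨x, hx⟩ := h
      exact Set.eq_univ_of_forall fun y => (Subsingleton.elim x y) ▸ hx
    simp [this]

/-- Key lemma: difference of integrals of a `[0,1]`-valued function is bounded by `tvDist`. -/
lemma toReal_lintegral_sub_le (P Q : Measure α) [IsProbabilityMeasure P] [IsProbabilityMeasure Q]
    {f : α → ℝ≥0∞} (hf : Measurable f) (hf1 : ∀ x, f x ≤ 1) :
    (∫⁻ x, f x ∂P).toReal - (∫⁻ x, f x ∂Q).toReal ≤ tvDist P Q := by
  obtain ⟨s, hs, h1, h2⟩ := hahn_decomposition (μ := P) (ν := Q)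
  have hfin : ∀ (μ : Measure α) [IsProbabilityMeasure μ] (t : Set α), ∫⁻ x in t, f x ∂μ ≠ ∞ := by
    intro μ _ t
    have : ∫⁻ x in t, f x ∂μ ≤ 1 := by
      calc ∫⁻ x in t, f x ∂μ ≤ ∫⁻ _ in t, 1 ∂μ := lintegral_mono hf1
      _ = μ t := by simp
      _ ≤ 1 := prob_le_one
    exact (this.trans_lt (by simp)).ne
  -- restricted measure inequalities
  have hQP : Q.restrict s ≤ P.restrict s := by
    refine Measure.le_intro fun A hA _ => ?_
    rw [Measure.restrict_apply hA, Measure.restrict_apply hA]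
    exact h1 _ (hA.inter hs) Set.inter_subset_right
  have hPQ : P.restrict sᶜ ≤ Q.restrict sᶜ := by
    refine Measure.le_intro fun A hA _ => ?_
    rw [Measure.restrict_apply hA, Measure.restrict_apply hA]
    exact h2 _ (hA.inter hs.compl) Set.inter_subset_right
  have hsplit : ∀ (μ : Measure α) [IsProbabilityMeasure μ],
      ∫⁻ x in s, f x ∂μ + ∫⁻ x in s, (1 - f x) ∂μ = μ s := by
    intro μ _
    rw [← lintegral_add_left hf]
    have : ∀ x, f x + (1 - f x) = 1 := fun x => add_tsub_cancel_of_le (hf1 x)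
    simp [this]
  have key : ∫⁻ x in s, f x ∂P + Q s ≤ ∫⁻ x in s, f x ∂Q + P s := by
    calc ∫⁻ x in s, f x ∂P + Q s
        = ∫⁻ x in s, f x ∂P + (∫⁻ x in s, f x ∂Q + ∫⁻ x in s, (1 - f x) ∂Q) := by
          rw [hsplit Q]
      _ ≤ ∫⁻ x in s, f x ∂P + (∫⁻ x in s, f x ∂Q + ∫⁻ x in s, (1 - f x) ∂P) := by
          gcongr
      _ = ∫⁻ x in s, f x ∂Q + (∫⁻ x in s, f x ∂P + ∫⁻ x in s, (1 - f x) ∂P) := by ring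
      _ = ∫⁻ x in s, f x ∂Q + P s := by rw [hsplit P]
  have hc : ∫⁻ x in sᶜ, f x ∂P ≤ ∫⁻ x in sᶜ, f x ∂Q := lintegral_mono' hPQ le_rfl
  have total : ∫⁻ x, f x ∂P + Q s ≤ ∫⁻ x, f x ∂Q + P s := by
    rw [← lintegral_add_compl f hs (μ := P), ← lintegral_add_compl f hs (μ := Q)]
    calc ∫⁻ x in s, f x ∂P + ∫⁻ x in sᶜ, f x ∂P + Q s
        = (∫⁻ x in s, f x ∂P + Q s) + ∫⁻ x in sᶜ, f x ∂P := by ring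
      _ ≤ (∫⁻ x in s, f x ∂Q + P s) + ∫⁻ x in sᶜ, f x ∂Q := add_le_add key hc
      _ = ∫⁻ x in s, f x ∂Q + ∫⁻ x in sᶜ, f x ∂Q + P s := by ring
  -- move to real numbers
  have h₁ : (∫⁻ x, f x ∂P).toReal + (Q s).toReal ≤ (∫⁻ x, f x ∂Q).toReal + (P s).toReal := by
    rw [← ENNReal.toReal_add (by simpa using hfin P Set.univ) (measure_ne_top _ _),
      ← ENNReal.toReal_add (by simpa using hfin Q Set.univ) (measure_ne_top _ _)]
    exact ENNReal.toReal_mono (ENNReal.add_ne_top.mpr ⟨by simpa using hfin Q Set.univ, measure_ne_top _ _⟩) total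
  have h₂ := sub_le_tvDist P Q hs
  linarith

/-- Data processing inequality: composing with a common Markov kernel. -/
lemma tvDist_compProd_le (μ ν : Measure α) [IsProbabilityMeasure μ] [IsProbabilityMeasure ν]
    (κ : ProbabilityTheory.Kernel α β) [ProbabilityTheory.IsMarkovKernel κ] :
    tvDist (μ ⊗ₘ κ) (ν ⊗ₘ κ) ≤ tvDist μ ν := by
  have core : ∀ (μ ν : Measure α) [IsProbabilityMeasure μ] [IsProbabilityMeasure ν],
      ∀ A : {A : Set (α × β) // MeasurableSet A},
      ((μ ⊗ₘ κ) A.1).toReal - ((ν ⊗ₘ κ) A.1).toReal ≤ tvDist μ ν := by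
    intro μ ν _ _ A
    rw [Measure.compProd_apply A.2, Measure.compProd_apply A.2]
    exact toReal_lintegral_sub_le μ ν
      (ProbabilityTheory.Kernel.measurable_kernel_prodMk_left A.2) fun x => prob_le_one
  refine ciSup_le fun A => ?_
  rw [abs_sub_le_iff]
  exact ⟨core μ ν A, (tvDist_comm μ ν) ▸ core ν μ A⟩

end TVAux

section KernelHahn

open ProbabilityTheory

variable {α β γ : Type*} [MeasurableSpace α] [MeasurableSpace β] [MeasurableSpace γ]
  [MeasurableSpace.CountablyGenerated β]

/-- A jointly measurable "Hahn set" for a pair of kernels. -/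
def kernelHahnSet (κ η : Kernel γ β) : Set (γ × β) :=
  {p | (1:ℝ)/2 ≤ Kernel.rnDerivAux κ (κ + η) p.1 p.2}

lemma measurableSet_kernelHahnSet (κ η : Kernel γ β) : MeasurableSet (kernelHahnSet κ η) :=
  (Kernel.measurable_rnDerivAux κ (κ + η)) measurableSet_Ici

lemma kernelHahnSet_apply (κ η : Kernel γ β) [IsMarkovKernel κ] [IsMarkovKernel η]
    (a : γ) {s : Set β} (hs : MeasurableSet s) :
    κ a s = ∫⁻ x in s, ENNReal.ofReal (Kernel.rnDerivAux κ (κ + η) a x) ∂(κ + η) a :=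
  (Kernel.setLIntegral_rnDerivAux κ η a hs).symm

lemma kernelHahnSet_apply' (κ η : Kernel γ β) [IsMarkovKernel κ] [IsMarkovKernel η]
    (a : γ) (s : Set β) :
    η a s = ∫⁻ x in s, ENNReal.ofReal (1 - Kernel.rnDerivAux κ (κ + η) a x) ∂(κ + η) a := by
  conv_lhs => rw [← Kernel.withDensity_one_sub_rnDerivAux κ η]
  rw [Kernel.withDensity_apply']
  · simp_rw [ENNReal.ofNNReal_toNNReal]
  · exact (measurable_const.sub
      (Kernel.measurable_rnDerivAux _ _)).real_toNNReal.coe_nnreal_ennreal.comp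
      (measurable_fst.prodMk measurable_snd)

lemma kernelHahn_key (κ η : Kernel γ β) [IsMarkovKernel κ] [IsMarkovKernel η]
    (a : γ) {B : Set β} (hB : MeasurableSet B) :
    κ a B + η a (Prod.mk a ⁻¹' kernelHahnSet κ η)
      ≤ κ a (Prod.mk a ⁻¹' kernelHahnSet κ η) + η a B := by
  set E : Set β := Prod.mk a ⁻¹' kernelHahnSet κ η with hE_def
  have hE : MeasurableSet E := measurable_prodMk_left (measurableSet_kernelHahnSet κ η)
  have h1 : κ a (B \ E) ≤ η a (B \ E) := by
    rw [kernelHahnSet_apply κ η a (hB.diff hE), kernelHahnSet_apply' κ η a (B \ E)]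
    refine setLIntegral_mono
      ((measurable_const.sub ((Kernel.measurable_rnDerivAux _ _).comp
        measurable_prodMk_left)).ennreal_ofReal) fun x hx => ?_
    refine ENNReal.ofReal_le_ofReal ?_
    have : ¬ ((1:ℝ)/2 ≤ Kernel.rnDerivAux κ (κ + η) a x) := hx.2
    linarith [not_le.mp this]
  have h2 : η a (E \ B) ≤ κ a (E \ B) := by
    rw [kernelHahnSet_apply κ η a (hE.diff hB), kernelHahnSet_apply' κ η a (E \ B)]
    refine setLIntegral_mono
      (((Kernel.measurable_rnDerivAux _ _).comp
        measurable_prodMk_left).ennreal_ofReal) fun x hx => ?_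
    refine ENNReal.ofReal_le_ofReal ?_
    have : (1:ℝ)/2 ≤ Kernel.rnDerivAux κ (κ + η) a x := hx.1
    linarith
  calc κ a B + η a E
      = (κ a (B ∩ E) + κ a (B \ E)) + (η a (E ∩ B) + η a (E \ B)) := by
        rw [measure_inter_add_diff B hE, measure_inter_add_diff E hB]
    _ ≤ (κ a (B ∩ E) + η a (B \ E)) + (η a (E ∩ B) + κ a (E \ B)) := by
        exact add_le_add (add_le_add le_rfl h1) (add_le_add le_rfl h2)
    _ = (κ a (E ∩ B) + κ a (E \ B)) + (η a (B ∩ E) + η a (B \ E)) := by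
        rw [Set.inter_comm B E]; ring
    _ = κ a E + η a B := by
        rw [measure_inter_add_diff B hE, measure_inter_add_diff E hB]

lemma tvDist_compProd_comap_le (μ : Measure α) [IsProbabilityMeasure μ]
    {f : α → γ} (hf : Measurable f)
    (κ η : Kernel γ β) [IsMarkovKernel κ] [IsMarkovKernel η] :
    tvDist (μ ⊗ₘ κ.comap f hf) (μ ⊗ₘ η.comap f hf)
      ≤ tvDist ((μ.map f) ⊗ₘ κ) ((μ.map f) ⊗ₘ η) := by
  haveI : IsProbabilityMeasure (μ.map f) := Measure.isProbabilityMeasure_map hf.aemeasurable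
  have core : ∀ (κ η : Kernel γ β), IsMarkovKernel κ → IsMarkovKernel η →
      ∀ A : {A : Set (α × β) // MeasurableSet A},
      ((μ ⊗ₘ κ.comap f hf) A.1).toReal - ((μ ⊗ₘ η.comap f hf) A.1).toReal
        ≤ tvDist ((μ.map f) ⊗ₘ κ) ((μ.map f) ⊗ₘ η) := by
    intro κ η hκ hη A
    set E := kernelHahnSet κ η with hE_def
    have hE : MeasurableSet E := measurableSet_kernelHahnSet κ η
    have hkA : Measurable fun x => (κ.comap f hf) x (Prod.mk x ⁻¹' A.1) :=
      Kernel.measurable_kernel_prodMk_left A.2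
    have hhA : Measurable fun x => (η.comap f hf) x (Prod.mk x ⁻¹' A.1) :=
      Kernel.measurable_kernel_prodMk_left A.2
    have hkE : Measurable fun a : γ => κ a (Prod.mk a ⁻¹' E) :=
      Kernel.measurable_kernel_prodMk_left hE
    have hhE : Measurable fun a : γ => η a (Prod.mk a ⁻¹' E) :=
      Kernel.measurable_kernel_prodMk_left hE
    have hsum : ∫⁻ x, ((κ.comap f hf) x (Prod.mk x ⁻¹' A.1)
          + η (f x) (Prod.mk (f x) ⁻¹' E)) ∂μ
        ≤ ∫⁻ x, (κ (f x) (Prod.mk (f x) ⁻¹' E)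
          + (η.comap f hf) x (Prod.mk x ⁻¹' A.1)) ∂μ := by
      refine lintegral_mono fun x => ?_
      have := kernelHahn_key κ η (f x) (B := Prod.mk x ⁻¹' A.1) (measurable_prodMk_left A.2)
      simpa [Kernel.comap_apply'] using this
    have hEint : ∀ (ξ : Kernel γ β), IsMarkovKernel ξ →
        ∫⁻ x, ξ (f x) (Prod.mk (f x) ⁻¹' E) ∂μ = ((μ.map f) ⊗ₘ ξ) E := by
      intro ξ hξ
      rw [Measure.compProd_apply hE, lintegral_map (Kernel.measurable_kernel_prodMk_left hE) hf]
    have hkEf : Measurable fun x => κ (f x) (Prod.mk (f x) ⁻¹' E) := hkE.comp hf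
    rw [lintegral_add_left hkA, lintegral_add_left hkEf,
      hEint κ hκ, hEint η hη] at hsum
    rw [← Measure.compProd_apply A.2, ← Measure.compProd_apply A.2] at hsum
    have h₁ : ((μ ⊗ₘ κ.comap f hf) A.1).toReal + (((μ.map f) ⊗ₘ η) E).toReal
        ≤ (((μ.map f) ⊗ₘ κ) E).toReal + ((μ ⊗ₘ η.comap f hf) A.1).toReal := by
      rw [← ENNReal.toReal_add (measure_ne_top _ _) (measure_ne_top _ _),
        ← ENNReal.toReal_add (measure_ne_top _ _) (measure_ne_top _ _)]
      exact ENNReal.toReal_mono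
        (ENNReal.add_ne_top.mpr ⟨measure_ne_top _ _, measure_ne_top _ _⟩) hsum
    have h₂ := sub_le_tvDist ((μ.map f) ⊗ₘ κ) ((μ.map f) ⊗ₘ η) hE
    linarith
  refine ciSup_le fun A => ?_
  rw [abs_sub_le_iff]
  refine ⟨core κ η inferInstance inferInstance A, ?_⟩
  rw [tvDist_comm ((μ.map f) ⊗ₘ κ)]
  exact core η κ inferInstance inferInstance A
end KernelHahn

section CondSection

open ProbabilityTheory

set_option linter.unusedSectionVars false

variable {α U W E : Type*} {mα : MeasurableSpace α} [StandardBorelSpace α] [Nonempty α]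
  [MeasurableSpace U] [MeasurableSpace W] [MeasurableSpace E] [StandardBorelSpace E] [Nonempty E]
  {μ : Measure α} [IsProbabilityMeasure μ]
  {Y : α → E} {V : α → U} {r : U → W} {Z : α → W}

lemma setLIntegral_condDistrib_of_condIndepFun
    (hY : Measurable Y) (hV : Measurable V) (hZm : Measurable Z)
    {hm' : MeasurableSpace.comap Z inferInstance ≤ mα}
    (hind : CondIndepFun (MeasurableSpace.comap Z inferInstance) hm' Y V μ)
    {A : Set U} (hA : MeasurableSet A) {B : Set E} (hB : MeasurableSet B) :
    ∫⁻ x in V ⁻¹' A, condDistrib Y Z μ (Z x) B ∂μ = μ (V ⁻¹' A ∩ Y ⁻¹' B) := by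
  have hmeas : Measurable fun x => condDistrib Y Z μ (Z x) B :=
    (measurable_condDistrib hB).mono hm' le_rfl
  set g : α → ℝ := μ⟦Y ⁻¹' B | MeasurableSpace.comap Z inferInstance⟧ with hg_def
  have h1 : (fun x => (condDistrib Y Z μ (Z x) B).toReal) =ᵐ[μ] g :=
    condDistrib_ae_eq_condExp hZm hY hB
  set c : α → ℝ := (V ⁻¹' A).indicator (fun _ => (1:ℝ)) with hc_def
  have hc_meas : StronglyMeasurable c :=
    stronglyMeasurable_const.indicator (hV hA)
  have hc_bdd : ∀ x, ‖c x‖ ≤ 1 := by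
    intro x; by_cases hx : x ∈ V ⁻¹' A <;>
      simp [c, hx, Set.indicator_of_mem, Set.indicator_of_notMem]
  have hg_int : Integrable g μ := integrable_condExp
  have hgc_int : Integrable (g * c) μ :=
    (hg_int.bdd_mul (c := 1) hc_meas.aestronglyMeasurable (ae_of_all _ hc_bdd)).congr
      (Filter.Eventually.of_forall fun x => mul_comm (c x) (g x))
  have hreal : ∫ x in V ⁻¹' A, (condDistrib Y Z μ (Z x) B).toReal ∂μ
      = (μ (V ⁻¹' A ∩ Y ⁻¹' B)).toReal := by
    have e1 : ∫ x in V ⁻¹' A, (condDistrib Y Z μ (Z x) B).toReal ∂μ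
        = ∫ x in V ⁻¹' A, g x ∂μ :=
      integral_congr_ae (ae_restrict_of_ae h1)
    have e2 : ∫ x in V ⁻¹' A, g x ∂μ = ∫ x, (g * c) x ∂μ := by
      rw [← integral_indicator (hV hA)]
      congr 1
      funext x
      by_cases hx : x ∈ V ⁻¹' A <;>
        simp [c, hx, Set.indicator_of_mem, Set.indicator_of_notMem]
    have e3 : ∫ x, (g * c) x ∂μ = ∫ x, (μ[g * c | MeasurableSpace.comap Z inferInstance]) x ∂μ :=
      (integral_condExp hm').symm
    have e4 : μ[g * c | MeasurableSpace.comap Z inferInstance]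
        =ᵐ[μ] g * μ[c | MeasurableSpace.comap Z inferInstance] :=
      condExp_mul_of_stronglyMeasurable_left stronglyMeasurable_condExp hgc_int
        ((integrable_const (1:ℝ)).indicator (hV hA))
    have e5 : (fun ω => g ω * (μ[c | MeasurableSpace.comap Z inferInstance]) ω)
        =ᵐ[μ] μ⟦Y ⁻¹' B ∩ V ⁻¹' A | MeasurableSpace.comap Z inferInstance⟧ :=
      (((condIndepFun_iff_condExp_inter_preimage_eq_mul hY hV).mp hind) B A hB hA).symm
    have e6 : ∫ x, (μ⟦Y ⁻¹' B ∩ V ⁻¹' A | MeasurableSpace.comap Z inferInstance⟧) x ∂μ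
        = (μ (Y ⁻¹' B ∩ V ⁻¹' A)).toReal := by
      rw [integral_condExp hm', integral_indicator_const (1:ℝ) ((hY hB).inter (hV hA))]
      simp [measureReal_def]
    calc ∫ x in V ⁻¹' A, (condDistrib Y Z μ (Z x) B).toReal ∂μ
        = ∫ x, (g * c) x ∂μ := by rw [e1, e2]
      _ = ∫ x, (μ[g * c | MeasurableSpace.comap Z inferInstance]) x ∂μ := e3
      _ = ∫ x, (g * μ[c | MeasurableSpace.comap Z inferInstance]) x ∂μ := integral_congr_ae e4
      _ = ∫ x, (μ⟦Y ⁻¹' B ∩ V ⁻¹' A | MeasurableSpace.comap Z inferInstance⟧) x ∂μ :=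
          integral_congr_ae e5
      _ = (μ (Y ⁻¹' B ∩ V ⁻¹' A)).toReal := e6
      _ = (μ (V ⁻¹' A ∩ Y ⁻¹' B)).toReal := by rw [Set.inter_comm]
  have hfin : ∫⁻ x in V ⁻¹' A, condDistrib Y Z μ (Z x) B ∂μ ≠ ∞ := by
    have hle : ∫⁻ x in V ⁻¹' A, condDistrib Y Z μ (Z x) B ∂μ ≤ 1 := by
      calc ∫⁻ x in V ⁻¹' A, condDistrib Y Z μ (Z x) B ∂μ
          ≤ ∫⁻ _ in V ⁻¹' A, 1 ∂μ := lintegral_mono fun x => prob_le_one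
        _ = μ (V ⁻¹' A) := by simp
        _ ≤ 1 := prob_le_one
    exact (hle.trans_lt (by simp)).ne
  have htoReal : ∫ x in V ⁻¹' A, (condDistrib Y Z μ (Z x) B).toReal ∂μ
      = (∫⁻ x in V ⁻¹' A, condDistrib Y Z μ (Z x) B ∂μ).toReal :=
    integral_toReal hmeas.aemeasurable.restrict
      (Filter.Eventually.of_forall fun x => measure_lt_top _ _)
  rw [htoReal] at hreal
  exact (ENNReal.toReal_eq_toReal_iff' hfin (measure_ne_top _ _)).mp hreal

lemma map_pair_eq_compProd_comap
    (hY : Measurable Y) (hV : Measurable V) (hr : Measurable r)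
    (hZ : Z = r ∘ V) (hZm : Measurable Z)
    {hm' : MeasurableSpace.comap Z inferInstance ≤ mα}
    (hind : CondIndepFun (MeasurableSpace.comap Z inferInstance) hm' Y V μ) :
    μ.map (fun x => (V x, Y x)) = (μ.map V) ⊗ₘ ((condDistrib Y Z μ).comap r hr) := by
  haveI : IsProbabilityMeasure (μ.map V) := Measure.isProbabilityMeasure_map hV.aemeasurable
  haveI : IsProbabilityMeasure (μ.map (fun x => (V x, Y x))) :=
    Measure.isProbabilityMeasure_map (hV.prodMk hY).aemeasurable
  refine ext_of_generate_finite _ generateFrom_prod.symm isPiSystem_prod ?_ ?_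
  · rintro _ ⟨A, hA, B, hB, rfl⟩
    simp only [Set.mem_setOf_eq] at hA hB
    rw [Measure.map_apply (hV.prodMk hY) (hA.prod hB), Set.mk_preimage_prod,
      Measure.compProd_apply_prod hA hB]
    simp_rw [Kernel.comap_apply']
    have hFmeas : Measurable fun u : U => condDistrib Y Z μ (r u) B :=
      (Kernel.measurable_coe _ hB).comp hr
    rw [setLIntegral_map hA hFmeas hV]
    have heq : ∀ x : α, condDistrib Y Z μ (r (V x)) B = condDistrib Y Z μ (Z x) B := by
      intro x; rw [hZ]; rfl
    simp_rw [heq]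
    exact (setLIntegral_condDistrib_of_condIndepFun hY hV hZm hind hA hB).symm
  · simp [measure_univ]

lemma map_pair_eq_compProd_condDistrib (hY : Measurable Y) (hZm : Measurable Z) :
    μ.map (fun x => (Z x, Y x)) = (μ.map Z) ⊗ₘ condDistrib Y Z μ := by
  haveI : IsProbabilityMeasure (μ.map (fun x => (Z x, Y x))) :=
    Measure.isProbabilityMeasure_map (hZm.prodMk hY).aemeasurable
  rw [condDistrib_def, ← Measure.fst_map_prodMk (X := Z) hY,
    Measure.disintegrate]

end CondSection

section Main

open ProbabilityTheory

set_option linter.unusedSectionVars false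
set_option maxHeartbeats 1000000

variable {n : ℕ} {Ω : Fin n → Type u} [∀ i, MeasurableSpace (Ω i)]
  [∀ i, StandardBorelSpace (Ω i)] [∀ i, Nonempty (Ω i)]

/-- The single-step inequality. -/
lemma bayes_step (par : Fin n → Finset (Fin n)) (hpar : ∀ i, par i ⊆ Finset.Iio i)
    (P Q : Measure (∀ i, Ω i)) [IsProbabilityMeasure P] [IsProbabilityMeasure Q]
    (hP : IsBayesNet P par) (hQ : IsBayesNet Q par) (i : Fin n) :
    tvDist (P.map (proj (insert i (Finset.Iio i)))) (Q.map (proj (insert i (Finset.Iio i))))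
      ≤ tvDist (P.map (proj (Finset.Iio i))) (Q.map (proj (Finset.Iio i)))
        + 2 * tvDist (P.map (proj (insert i (par i)))) (Q.map (proj (insert i (par i)))) := by
  classical
  have hY : Measurable (fun x : ∀ j, Ω j => x i) := measurable_pi_apply i
  have hV : Measurable (proj (Ω := Ω) (Finset.Iio i)) := measurable_proj _
  have hZm : Measurable (proj (Ω := Ω) (par i)) := measurable_proj _
  set r : (∀ j : ↑(Finset.Iio i), Ω j) → (∀ j : ↑(par i), Ω j) :=
    fun u j => u ⟨j.1, hpar i j.2⟩ with hr_def
  have hr : Measurable r := measurable_pi_lambda _ fun j => measurable_pi_apply _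
  have hZ : proj (Ω := Ω) (par i) = r ∘ proj (Ω := Ω) (Finset.Iio i) := rfl
  -- probability instances for the various image measures
  haveI h0 : IsProbabilityMeasure (P.map (proj (Ω := Ω) (Finset.Iio i))) :=
    Measure.isProbabilityMeasure_map hV.aemeasurable
  haveI : IsProbabilityMeasure (Q.map (proj (Ω := Ω) (Finset.Iio i))) :=
    Measure.isProbabilityMeasure_map hV.aemeasurable
  haveI : IsProbabilityMeasure (P.map (proj (Ω := Ω) (par i))) :=
    Measure.isProbabilityMeasure_map hZm.aemeasurable
  haveI : IsProbabilityMeasure (Q.map (proj (Ω := Ω) (par i))) :=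
    Measure.isProbabilityMeasure_map hZm.aemeasurable
  have hpairVY : Measurable (fun x : ∀ j, Ω j => (proj (Finset.Iio i) x, x i)) :=
    hV.prodMk hY
  have hpairZY : Measurable (fun x : ∀ j, Ω j => (proj (par i) x, x i)) :=
    hZm.prodMk hY
  haveI : IsProbabilityMeasure (P.map (fun x : ∀ j, Ω j => (proj (Finset.Iio i) x, x i))) :=
    Measure.isProbabilityMeasure_map hpairVY.aemeasurable
  haveI : IsProbabilityMeasure (Q.map (fun x : ∀ j, Ω j => (proj (Finset.Iio i) x, x i))) :=
    Measure.isProbabilityMeasure_map hpairVY.aemeasurable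
  haveI : IsProbabilityMeasure (P.map (fun x : ∀ j, Ω j => (proj (par i) x, x i))) :=
    Measure.isProbabilityMeasure_map hpairZY.aemeasurable
  haveI : IsProbabilityMeasure (Q.map (fun x : ∀ j, Ω j => (proj (par i) x, x i))) :=
    Measure.isProbabilityMeasure_map hpairZY.aemeasurable
  have hprojins : Measurable (proj (Ω := Ω) (insert i (par i))) := measurable_proj _
  haveI : IsProbabilityMeasure (P.map (proj (Ω := Ω) (insert i (par i)))) :=
    Measure.isProbabilityMeasure_map hprojins.aemeasurable
  haveI : IsProbabilityMeasure (Q.map (proj (Ω := Ω) (insert i (par i)))) :=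
    Measure.isProbabilityMeasure_map hprojins.aemeasurable
  -- Step (1): going from the finset `insert i (Iio i)` to the pair `(V, Y)`
  have hcast_meas : ∀ (m : Fin n) (h : m = i),
      Measurable fun ω : Ω i => cast (congrArg Ω h.symm) ω := by
    rintro m rfl; simpa using measurable_id'
  set φ : ((∀ j : ↑(Finset.Iio i), Ω j) × Ω i) → (∀ j : ↑(insert i (Finset.Iio i)), Ω j) :=
    fun p j => if h : j.1 = i then cast (congrArg Ω h.symm) p.2 else
      p.1 ⟨j.1, by
        rcases Finset.mem_insert.mp j.2 with h' | h'
        · exact absurd h' h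
        · exact h'⟩ with hφ_def
  have hφ : Measurable φ := by
    refine measurable_pi_lambda _ fun j => ?_
    by_cases h : j.1 = i
    · simp only [hφ_def, dif_pos h]
      exact (hcast_meas j.1 h).comp measurable_snd
    · simp only [hφ_def, dif_neg h]
      exact (measurable_pi_apply _).comp measurable_fst
  have hφcomp : ∀ x : ∀ j, Ω j,
      φ (proj (Finset.Iio i) x, x i) = proj (insert i (Finset.Iio i)) x := by
    intro x
    funext j
    by_cases h : j.1 = i
    · simp only [hφ_def, dif_pos h]
      have : ∀ (m : Fin n) (h : m = i), cast (congrArg Ω h.symm) (x i) = x m := by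
        rintro m rfl; rfl
      exact this j.1 h
    · simp only [hφ_def, dif_neg h]
      rfl
  have h1 : tvDist (P.map (proj (insert i (Finset.Iio i))))
        (Q.map (proj (insert i (Finset.Iio i))))
      ≤ tvDist (P.map (fun x : ∀ j, Ω j => (proj (Finset.Iio i) x, x i)))
        (Q.map (fun x : ∀ j, Ω j => (proj (Finset.Iio i) x, x i))) := by
    have hmapP : P.map (proj (insert i (Finset.Iio i)))
        = (P.map (fun x : ∀ j, Ω j => (proj (Finset.Iio i) x, x i))).map φ := by
      rw [Measure.map_map hφ hpairVY]
      congr 1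
      funext x
      exact (hφcomp x).symm
    have hmapQ : Q.map (proj (insert i (Finset.Iio i)))
        = (Q.map (fun x : ∀ j, Ω j => (proj (Finset.Iio i) x, x i))).map φ := by
      rw [Measure.map_map hφ hpairVY]
      congr 1
      funext x
      exact (hφcomp x).symm
    rw [hmapP, hmapQ]
    exact tvDist_map_le _ _ hφ
  -- Step (2): disintegration of the pair measures
  have hLP : P.map (fun x : ∀ j, Ω j => (proj (Finset.Iio i) x, x i))
      = (P.map (proj (Finset.Iio i))) ⊗ₘ
        ((condDistrib (fun x : ∀ j, Ω j => x i) (proj (par i)) P).comap r hr) :=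
    map_pair_eq_compProd_comap hY hV hr hZ hZm (hP i)
  have hLQ : Q.map (fun x : ∀ j, Ω j => (proj (Finset.Iio i) x, x i))
      = (Q.map (proj (Finset.Iio i))) ⊗ₘ
        ((condDistrib (fun x : ∀ j, Ω j => x i) (proj (par i)) Q).comap r hr) :=
    map_pair_eq_compProd_comap hY hV hr hZ hZm (hQ i)
  have hjointP : P.map (fun x : ∀ j, Ω j => (proj (par i) x, x i))
      = (P.map (proj (par i))) ⊗ₘ condDistrib (fun x : ∀ j, Ω j => x i) (proj (par i)) P :=
    map_pair_eq_compProd_condDistrib hY hZm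
  have hjointQ : Q.map (fun x : ∀ j, Ω j => (proj (par i) x, x i))
      = (Q.map (proj (par i))) ⊗ₘ condDistrib (fun x : ∀ j, Ω j => x i) (proj (par i)) Q :=
    map_pair_eq_compProd_condDistrib hY hZm
  set κP := condDistrib (fun x : ∀ j, Ω j => x i) (proj (par i)) P with hκP_def
  set κQ := condDistrib (fun x : ∀ j, Ω j => x i) (proj (par i)) Q with hκQ_def
  have hmaprP : (P.map (proj (Finset.Iio i))).map r = P.map (proj (par i)) := by
    rw [Measure.map_map hr hV, ← hZ]
  have hmaprQ : (Q.map (proj (Finset.Iio i))).map r = Q.map (proj (par i)) := by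
    rw [Measure.map_map hr hV, ← hZ]
  -- Step (3): data processing from `insert i (par i)` to the pair `(Z, Y)`
  have h3 : ∀ R S : Measure (∀ j, Ω j), ∀ (_ : IsProbabilityMeasure R)
      (_ : IsProbabilityMeasure S),
      tvDist (R.map (fun x : ∀ j, Ω j => (proj (par i) x, x i)))
          (S.map (fun x : ∀ j, Ω j => (proj (par i) x, x i)))
        ≤ tvDist (R.map (proj (insert i (par i)))) (S.map (proj (insert i (par i)))) := by
    intro R S hR hS
    set ψ : (∀ j : ↑(insert i (par i)), Ω j) → ((∀ j : ↑(par i), Ω j) × Ω i) :=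
      fun v => (fun j => v ⟨j.1, Finset.mem_insert_of_mem j.2⟩,
        v ⟨i, Finset.mem_insert_self i (par i)⟩) with hψ_def
    have hψ : Measurable ψ :=
      (measurable_pi_lambda _ fun j => measurable_pi_apply _).prodMk (measurable_pi_apply _)
    haveI : IsProbabilityMeasure (R.map (proj (Ω := Ω) (insert i (par i)))) :=
      Measure.isProbabilityMeasure_map hprojins.aemeasurable
    haveI : IsProbabilityMeasure (S.map (proj (Ω := Ω) (insert i (par i)))) :=
      Measure.isProbabilityMeasure_map hprojins.aemeasurable
    have hcomp : ∀ T : Measure (∀ j, Ω j),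
        T.map (fun x : ∀ j, Ω j => (proj (par i) x, x i))
          = (T.map (proj (insert i (par i)))).map ψ := by
      intro T
      rw [Measure.map_map hψ hprojins]
      rfl
    rw [hcomp R, hcomp S]
    exact tvDist_map_le _ _ hψ
  -- Step (4): the chain of inequalities
  have hchain : tvDist (P.map (fun x : ∀ j, Ω j => (proj (Finset.Iio i) x, x i)))
        (Q.map (fun x : ∀ j, Ω j => (proj (Finset.Iio i) x, x i)))
      ≤ tvDist (P.map (proj (Finset.Iio i))) (Q.map (proj (Finset.Iio i)))
        + 2 * tvDist (P.map (fun x : ∀ j, Ω j => (proj (par i) x, x i)))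
            (Q.map (fun x : ∀ j, Ω j => (proj (par i) x, x i))) := by
    rw [hLP, hLQ]
    have t1 : tvDist ((P.map (proj (Finset.Iio i))) ⊗ₘ (κP.comap r hr))
          ((Q.map (proj (Finset.Iio i))) ⊗ₘ (κQ.comap r hr))
        ≤ tvDist ((P.map (proj (Finset.Iio i))) ⊗ₘ (κP.comap r hr))
            ((P.map (proj (Finset.Iio i))) ⊗ₘ (κQ.comap r hr))
          + tvDist ((P.map (proj (Finset.Iio i))) ⊗ₘ (κQ.comap r hr))
            ((Q.map (proj (Finset.Iio i))) ⊗ₘ (κQ.comap r hr)) :=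
      tvDist_triangle _ _ _
    have t2 : tvDist ((P.map (proj (Finset.Iio i))) ⊗ₘ (κQ.comap r hr))
          ((Q.map (proj (Finset.Iio i))) ⊗ₘ (κQ.comap r hr))
        ≤ tvDist (P.map (proj (Finset.Iio i))) (Q.map (proj (Finset.Iio i))) :=
      tvDist_compProd_le _ _ _
    have t3 : tvDist ((P.map (proj (Finset.Iio i))) ⊗ₘ (κP.comap r hr))
          ((P.map (proj (Finset.Iio i))) ⊗ₘ (κQ.comap r hr))
        ≤ tvDist ((P.map (proj (par i))) ⊗ₘ κP) ((P.map (proj (par i))) ⊗ₘ κQ) := by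
      have := tvDist_compProd_comap_le (P.map (proj (Finset.Iio i))) hr κP κQ
      rwa [hmaprP] at this
    have t4 : tvDist ((P.map (proj (par i))) ⊗ₘ κP) ((P.map (proj (par i))) ⊗ₘ κQ)
        ≤ tvDist ((P.map (proj (par i))) ⊗ₘ κP) ((Q.map (proj (par i))) ⊗ₘ κQ)
          + tvDist ((Q.map (proj (par i))) ⊗ₘ κQ) ((P.map (proj (par i))) ⊗ₘ κQ) :=
      tvDist_triangle _ _ _
    have t5 : tvDist ((Q.map (proj (par i))) ⊗ₘ κQ) ((P.map (proj (par i))) ⊗ₘ κQ)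
        ≤ tvDist (Q.map (proj (par i))) (P.map (proj (par i))) :=
      tvDist_compProd_le _ _ _
    have t6 : tvDist (Q.map (proj (par i))) (P.map (proj (par i)))
        ≤ tvDist (Q.map (fun x : ∀ j, Ω j => (proj (par i) x, x i)))
            (P.map (fun x : ∀ j, Ω j => (proj (par i) x, x i))) := by
      have hfstP : P.map (proj (par i))
          = (P.map (fun x : ∀ j, Ω j => (proj (par i) x, x i))).map Prod.fst := by
        rw [Measure.map_map measurable_fst hpairZY]
        rfl
      have hfstQ : Q.map (proj (par i))
          = (Q.map (fun x : ∀ j, Ω j => (proj (par i) x, x i))).map Prod.fst := by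
        rw [Measure.map_map measurable_fst hpairZY]
        rfl
      rw [hfstP, hfstQ]
      exact tvDist_map_le _ _ measurable_fst
    have t7 : tvDist ((P.map (proj (par i))) ⊗ₘ κP) ((Q.map (proj (par i))) ⊗ₘ κQ)
        = tvDist (P.map (fun x : ∀ j, Ω j => (proj (par i) x, x i)))
            (Q.map (fun x : ∀ j, Ω j => (proj (par i) x, x i))) := by
      rw [hjointP, hjointQ]
    have t8 : tvDist (Q.map (fun x : ∀ j, Ω j => (proj (par i) x, x i)))
          (P.map (fun x : ∀ j, Ω j => (proj (par i) x, x i)))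
        = tvDist (P.map (fun x : ∀ j, Ω j => (proj (par i) x, x i)))
            (Q.map (fun x : ∀ j, Ω j => (proj (par i) x, x i))) := tvDist_comm _ _
    linarith
  calc tvDist (P.map (proj (insert i (Finset.Iio i))))
        (Q.map (proj (insert i (Finset.Iio i))))
      ≤ tvDist (P.map (fun x : ∀ j, Ω j => (proj (Finset.Iio i) x, x i)))
        (Q.map (fun x : ∀ j, Ω j => (proj (Finset.Iio i) x, x i))) := h1
    _ ≤ tvDist (P.map (proj (Finset.Iio i))) (Q.map (proj (Finset.Iio i)))
        + 2 * tvDist (P.map (fun x : ∀ j, Ω j => (proj (par i) x, x i)))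
            (Q.map (fun x : ∀ j, Ω j => (proj (par i) x, x i))) := hchain
    _ ≤ tvDist (P.map (proj (Finset.Iio i))) (Q.map (proj (Finset.Iio i)))
        + 2 * tvDist (P.map (proj (insert i (par i)))) (Q.map (proj (insert i (par i)))) := by
      have := h3 P Q inferInstance inferInstance
      linarith

end Main

/-- `2`-linear subadditivity of the total variation distance on Bayes-nets. -/
theorem tvDist_linear_subadditivity_bayes_net
    {n : ℕ} (Ω : Fin n → Type u) [∀ i, MeasurableSpace (Ω i)]
    [∀ i, StandardBorelSpace (Ω i)] [∀ i, Nonempty (Ω i)]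
    (par : Fin n → Finset (Fin n)) (hpar : ∀ i, par i ⊆ Finset.Iio i)
    (P Q : Measure (∀ i, Ω i)) [IsProbabilityMeasure P] [IsProbabilityMeasure Q]
    (hP : IsBayesNet P par) (hQ : IsBayesNet Q par) :
    tvDist P Q ≤ 2 * ∑ i : Fin n,
      tvDist (P.map (proj (insert i (par i)))) (Q.map (proj (insert i (par i)))) := by
  classical
  set S : ℕ → Finset (Fin n) := fun k => Finset.univ.filter (fun j : Fin n => (j:ℕ) < k)
    with hS_def
  have hprobP : ∀ s : Finset (Fin n), IsProbabilityMeasure (P.map (proj s)) :=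
    fun s => Measure.isProbabilityMeasure_map (measurable_proj s).aemeasurable
  have hprobQ : ∀ s : Finset (Fin n), IsProbabilityMeasure (Q.map (proj s)) :=
    fun s => Measure.isProbabilityMeasure_map (measurable_proj s).aemeasurable
  have hmain : ∀ k, k ≤ n →
      tvDist (P.map (proj (S k))) (Q.map (proj (S k)))
        ≤ 2 * ∑ i ∈ S k,
          tvDist (P.map (proj (insert i (par i)))) (Q.map (proj (insert i (par i)))) := by
    intro k
    induction k with
    | zero =>
      intro _
      have hS0 : S 0 = ∅ := by ext j; simp [hS_def]
      rw [hS0]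
      haveI : IsEmpty {x // x ∈ (∅ : Finset (Fin n))} := ⟨fun j => Finset.notMem_empty _ j.2⟩
      haveI := hprobP (∅ : Finset (Fin n))
      haveI := hprobQ (∅ : Finset (Fin n))
      rw [tvDist_eq_zero_of_subsingleton]
      simp
    | succ k ih =>
      intro hk1
      have hk : k < n := hk1
      have hSk : S k = Finset.Iio (⟨k, hk⟩ : Fin n) := by
        ext j
        simp only [hS_def, Finset.mem_filter, Finset.mem_univ, true_and, Finset.mem_Iio]
        simp [Fin.lt_def]
      have hS1 : S (k+1) = insert (⟨k, hk⟩ : Fin n) (S k) := by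
        ext j
        simp only [hS_def, Finset.mem_filter, Finset.mem_univ, true_and, Finset.mem_insert]
        constructor
        · intro h
          rcases Nat.lt_succ_iff_lt_or_eq.mp h with h | h
          · exact Or.inr h
          · exact Or.inl (Fin.ext h)
        · rintro (rfl | h)
          · exact Nat.lt_succ_self k
          · exact h.trans (Nat.lt_succ_self k)
      have hnotmem : (⟨k, hk⟩ : Fin n) ∉ S k := by
        simp [hS_def]
      have hstep := bayes_step par hpar P Q hP hQ (⟨k, hk⟩ : Fin n)
      rw [← hSk] at hstep
      rw [hS1, Finset.sum_insert hnotmem]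
      have hih := ih (Nat.le_of_succ_le hk1)
      haveI := hprobP (insert (⟨k, hk⟩ : Fin n) (S k))
      haveI := hprobQ (insert (⟨k, hk⟩ : Fin n) (S k))
      linarith
  have hfin := hmain n le_rfl
  have hSn : S n = Finset.univ := by
    ext j; simp [hS_def, j.isLt]
  rw [hSn] at hfin
  set g : (∀ j : ↑(Finset.univ : Finset (Fin n)), Ω j) → (∀ j, Ω j) :=
    fun u j => u ⟨j, Finset.mem_univ j⟩ with hg_def
  have hg : Measurable g := measurable_pi_lambda _ fun j => measurable_pi_apply _
  have hgP : P = (P.map (proj Finset.univ)).map g := by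
    rw [Measure.map_map hg (measurable_proj _)]
    have hid : g ∘ proj (Ω := Ω) Finset.univ = id := rfl
    rw [hid, Measure.map_id]
  have hgQ : Q = (Q.map (proj Finset.univ)).map g := by
    rw [Measure.map_map hg (measurable_proj _)]
    have hid : g ∘ proj (Ω := Ω) Finset.univ = id := rfl
    rw [hid, Measure.map_id]
  haveI := hprobP Finset.univ
  haveI := hprobQ Finset.univ
  calc tvDist P Q
      = tvDist ((P.map (proj Finset.univ)).map g) ((Q.map (proj Finset.univ)).map g) := by
        rw [← hgP, ← hgQ]
    _ ≤ tvDist (P.map (proj Finset.univ)) (Q.map (proj Finset.univ)) :=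
        tvDist_map_le _ _ hg
    _ ≤ 2 * ∑ i : Fin n,
        tvDist (P.map (proj (insert i (par i)))) (Q.map (proj (insert i (par i)))) := hfin
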